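/- If n and a are integers with 3 ≤ a ≤ ⌊n/2⌋ and n > 3a, then C(n;1,a) admits a 2-bounded independent broadcast of maximum cost β_b(C(n;1,a)). -/

import Mathlib

/-- The eccentricity of a vertex: maximum distance to any other vertex. -/
noncomputable def eccent {V : Type*} [Fintype V] (G : SimpleGraph V) (v : V) : ℕ :=
  Finset.univ.sup (fun u => G.dist v u)

/-- The diameter of a finite graph: maximum eccentricity. -/
noncomputable def graphDiam {V : Type*} [Fintype V] (G : SimpleGraph V) : ℕ :=
  Finset.univ.sup (fun v => eccent G v)

/-- `f` is an independent broadcast on `G`. -/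
def IsIndepBroadcast {V : Type*} [Fintype V] (G : SimpleGraph V) (f : V → ℕ) : Prop :=
  (∀ v, f v ≤ eccent G v) ∧
  ∀ u v : V, u ≠ v → 0 < f u → 0 < f v → max (f u) (f v) < G.dist u v

/-- The broadcast independence number: maximum cost of an independent broadcast. -/
noncomputable def betaB {V : Type*} [Fintype V] (G : SimpleGraph V) : ℕ :=
  sSup {k | ∃ f : V → ℕ, IsIndepBroadcast G f ∧ ∑ v, f v = k}

/-- The independence number: maximum size of an independent set. -/
noncomputable def alphaNum {V : Type*} [Fintype V] (G : SimpleGraph V) : ℕ :=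
  sSup {k | ∃ s : Finset V, (∀ u ∈ s, ∀ v ∈ s, ¬ G.Adj u v) ∧ s.card = k}

/-- The circulant graph `C(n;1,a)` on vertices `v_0,…,v_{n-1}` with edges
`v_i v_{i+1}` and `v_i v_{i+a}`, indices mod `n`. -/
def circulantGraph (n a : ℕ) : SimpleGraph (Fin n) :=
  SimpleGraph.fromRel (fun i j => (i.val + 1) % n = j.val ∨ (i.val + a) % n = j.val)

namespace Stmt8

variable {n a : ℕ}

def V (n : ℕ) [NeZero n] (x : ℤ) : Fin n :=
  ⟨(x % (n:ℤ)).toNat, by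
    have h0 : (0:ℤ) < (n:ℤ) := by exact_mod_cast Nat.pos_of_ne_zero (NeZero.ne n)
    have h1 := Int.emod_lt_of_pos x h0
    have h2 := Int.emod_nonneg x (Int.natCast_ne_zero.mpr (NeZero.ne n))
    rw [Int.toNat_lt h2]
    exact h1⟩

variable [NeZero n]

lemma npos : 0 < n := Nat.pos_of_ne_zero (NeZero.ne n)

lemma V_val (x : ℤ) : ((V n x).val : ℤ) = x % n := by
  simp only [V]
  exact Int.toNat_of_nonneg (Int.emod_nonneg x (Int.natCast_ne_zero.mpr (NeZero.ne n)))

lemma V_eq_iff {x y : ℤ} : V n x = V n y ↔ (n:ℤ) ∣ x - y := by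
  rw [Fin.ext_iff]
  constructor
  · intro h
    have : ((V n x).val : ℤ) = ((V n y).val : ℤ) := by exact_mod_cast h
    rw [V_val, V_val] at this
    rw [Int.emod_eq_emod_iff_emod_sub_eq_zero] at this
    exact Int.dvd_of_emod_eq_zero this
  · intro h
    have : x % n = y % n := by
      rw [Int.emod_eq_emod_iff_emod_sub_eq_zero]
      exact Int.emod_eq_zero_of_dvd h
    have h2 : ((V n x).val : ℤ) = ((V n y).val : ℤ) := by rw [V_val, V_val, this]
    exact_mod_cast h2

lemma V_ne_iff {x y : ℤ} : V n x ≠ V n y ↔ ¬ (n:ℤ) ∣ x - y :=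
  not_congr V_eq_iff

lemma V_val_self (v : Fin n) : V n (v.val : ℤ) = v := by
  apply Fin.ext
  have := V_val (n := n) (v.val : ℤ)
  have h2 : ((v.val : ℤ)) % n = (v.val : ℤ) := Int.emod_eq_of_lt (by positivity) (by exact_mod_cast v.isLt)
  omega

lemma rel_iff {x y : ℤ} (k : ℕ) :
    (((V n x).val + k) % n = (V n y).val) ↔ (n:ℤ) ∣ (x + k - y) := by
  constructor
  · intro h
    have hc : (((((V n x).val + k) % n : ℕ)) : ℤ) = ((V n y).val : ℤ) := by exact_mod_cast h
    push_cast at hc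
    rw [V_val, V_val] at hc
    rw [Int.emod_add_emod] at hc
    rw [Int.emod_eq_emod_iff_emod_sub_eq_zero] at hc
    exact Int.dvd_of_emod_eq_zero hc
  · intro h
    have hc : (x + k) % n = y % n := by
      rw [Int.emod_eq_emod_iff_emod_sub_eq_zero]
      exact Int.emod_eq_zero_of_dvd h
    have : ((((V n x).val + k) % n : ℕ) : ℤ) = ((V n y).val : ℤ) := by
      push_cast
      rw [V_val, V_val, Int.emod_add_emod, hc]
    exact_mod_cast this

lemma adj_iff {x y : ℤ} :
    (circulantGraph n a).Adj (V n x) (V n y) ↔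
      (¬ (n:ℤ) ∣ x - y) ∧ ((n:ℤ) ∣ (x + 1 - y) ∨ (n:ℤ) ∣ (x + a - y)
        ∨ (n:ℤ) ∣ (y + 1 - x) ∨ (n:ℤ) ∣ (y + a - x)) := by
  rw [circulantGraph, SimpleGraph.fromRel_adj]
  rw [V_ne_iff]
  constructor
  · rintro ⟨h1, h2⟩
    refine ⟨h1, ?_⟩
    rcases h2 with (h | h) | (h | h)
    · exact Or.inl ((rel_iff 1).mp h)
    · exact Or.inr (Or.inl ((rel_iff a).mp h))
    · exact Or.inr (Or.inr (Or.inl ((rel_iff 1).mp h)))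
    · exact Or.inr (Or.inr (Or.inr ((rel_iff a).mp h)))
  · rintro ⟨h1, h2⟩
    refine ⟨h1, ?_⟩
    rcases h2 with h | h | h | h
    · exact Or.inl (Or.inl ((rel_iff 1).mpr h))
    · exact Or.inl (Or.inr ((rel_iff a).mpr h))
    · exact Or.inr (Or.inl ((rel_iff 1).mpr h))
    · exact Or.inr (Or.inr ((rel_iff a).mpr h))

lemma dvd_small {N E : ℤ} (hN : 0 < N) (h : N ∣ E) (hE : |E| < 2*N) :
    E = -N ∨ E = 0 ∨ E = N := by
  obtain ⟨k, rfl⟩ := h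
  have hk : |k| ≤ 1 := by
    by_contra hk
    push_neg at hk
    have h2 : 2 ≤ |k| := hk
    have : 2*N ≤ N * |k| := by nlinarith
    rw [abs_mul, abs_of_pos hN] at hE
    omega
  obtain ⟨hk1, hk2⟩ := abs_le.mp hk
  interval_cases k
  · left; ring
  · right; left; ring
  · right; right; ring

lemma eq_zero_of_dvd_small {N E : ℤ} (hN : 0 < N) (h : N ∣ E) (hE : |E| < N) : E = 0 := by
  obtain ⟨h1, h2⟩ := abs_lt.mp hE
  rcases dvd_small hN h (by rw [abs_lt]; omega) with h | h | h <;> omega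

/-- The main integer criterion for two vertices being distinct and non-adjacent. -/
lemma not_adj_of_int (h3a : 3*a < n) {x y : ℤ}
    (hsm : |x - y| < n)
    (h0 : x - y ≠ 0) (h1 : x - y ≠ 1) (h1' : x - y ≠ -1)
    (hA : x - y ≠ (a:ℤ)) (hA' : x - y ≠ -(a:ℤ))
    (hw1 : x - y ≠ (n:ℤ) - 1) (hw1' : x - y ≠ 1 - (n:ℤ))
    (hwA : x - y ≠ (n:ℤ) - (a:ℤ)) (hwA' : x - y ≠ (a:ℤ) - (n:ℤ)) :
    V n x ≠ V n y ∧ ¬ (circulantGraph n a).Adj (V n x) (V n y) := by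
  have hnpos : (0:ℤ) < n := by exact_mod_cast Nat.pos_of_ne_zero (NeZero.ne n)
  obtain ⟨hs1, hs2⟩ := abs_lt.mp hsm
  constructor
  · rw [V_ne_iff]
    intro hd
    exact h0 (eq_zero_of_dvd_small hnpos hd hsm)
  · rw [adj_iff]
    rintro ⟨-, hd | hd | hd | hd⟩
    · have h : x + 1 - y = x - y + 1 := by ring
      rw [h] at hd
      rcases dvd_small hnpos hd (by rw [abs_lt]; omega) with h | h | h <;> omega
    · have h : x + a - y = x - y + a := by ring
      rw [h] at hd
      rcases dvd_small hnpos hd (by rw [abs_lt]; omega) with h | h | h <;> omega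
    · have h : y + 1 - x = -(x - y) + 1 := by ring
      rw [h] at hd
      rcases dvd_small hnpos hd (by rw [abs_lt]; omega) with h | h | h <;> omega
    · have h : y + a - x = -(x - y) + a := by ring
      rw [h] at hd
      rcases dvd_small hnpos hd (by rw [abs_lt]; omega) with h | h | h <;> omega

lemma adj_V_rel (h3a : 3*a < n) (ha : 3 ≤ a) (x : ℤ) {e : ℤ}
    (he : e = 1 ∨ e = -1 ∨ e = a ∨ e = -(a:ℤ)) :
    (circulantGraph n a).Adj (V n x) (V n (x + e)) := by
  have hnpos : (0:ℤ) < n := by exact_mod_cast Nat.pos_of_ne_zero (NeZero.ne n)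
  have han : (a:ℤ) < n := by exact_mod_cast (by omega : a < n)
  have hane : (3:ℤ) ≤ a := by exact_mod_cast ha
  rw [adj_iff]
  constructor
  · intro hd
    have heq : x - (x + e) = -e := by ring
    rw [heq] at hd
    have habs : |(-e)| < (n:ℤ) := by
      rw [abs_lt]
      rcases he with h|h|h|h <;> omega
    have := eq_zero_of_dvd_small hnpos hd habs
    rcases he with h|h|h|h <;> omega
  · rcases he with h|h|h|h
    · exact Or.inl (by rw [h]; exact ⟨0, by ring⟩)
    · exact Or.inr (Or.inr (Or.inl (by rw [h]; exact ⟨0, by ring⟩)))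
    · exact Or.inr (Or.inl (by rw [h]; exact ⟨0, by ring⟩))
    · exact Or.inr (Or.inr (Or.inr (by rw [h]; exact ⟨0, by ring⟩)))

lemma reachable_V (h3a : 3*a < n) (ha : 3 ≤ a) (x y : ℤ) :
    (circulantGraph n a).Reachable (V n x) (V n y) := by
  have key : ∀ (k : ℕ) (z : ℤ), (circulantGraph n a).Reachable (V n z) (V n (z + k)) := by
    intro k
    induction k with
    | zero =>
      intro z
      have h0 : (z:ℤ) + ((0:ℕ):ℤ) = z := by push_cast; ring
      rw [h0]
    | succ m ih =>
      intro z
      have h1 := ih z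
      have h2 : (circulantGraph n a).Adj (V n (z + m)) (V n (z + m + 1)) :=
        adj_V_rel h3a ha _ (Or.inl rfl)
      have : (z : ℤ) + (m+1 : ℕ) = z + m + 1 := by push_cast; ring
      rw [this]
      exact h1.trans h2.reachable
  rcases le_or_gt x y with h | h
  · have : y = x + ((y - x).toNat : ℤ) := by
      rw [Int.toNat_of_nonneg (by omega)]; ring
    rw [this]
    exact key _ x
  · have : x = y + ((x - y).toNat : ℤ) := by
      rw [Int.toNat_of_nonneg (by omega)]; ring
    rw [this]
    exact (key _ y).symm

lemma connected_circ (h3a : 3*a < n) (ha : 3 ≤ a) : (circulantGraph n a).Connected := by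
  constructor
  intro u v
  have := reachable_V (a := a) h3a ha (u.val : ℤ) (v.val : ℤ)
  rwa [V_val_self, V_val_self] at this

lemma dist_V_le_aux (h3a : 3*a < n) (ha : 3 ≤ a) :
    ∀ (N : ℕ) (x s t : ℤ), s.natAbs + t.natAbs ≤ N →
      (circulantGraph n a).dist (V n x) (V n (x + s + t*a)) ≤ s.natAbs + t.natAbs := by
  have hconn := connected_circ (n := n) h3a ha
  intro N
  induction N with
  | zero =>
    intro x s t h
    have hs : s = 0 := by omega
    have ht : t = 0 := by omega
    subst hs; subst ht
    simp
  | succ m ih =>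
    intro x s t h
    rcases eq_or_ne t 0 with ht | ht
    · subst ht
      rcases eq_or_ne s 0 with hs | hs
      · subst hs; simp
      · -- step in s direction
        rcases lt_or_gt_of_ne hs with hneg | hpos
        · -- s < 0 : go to s+1
          have h2 : (circulantGraph n a).dist (V n x) (V n (x + (s+1) + 0*a)) ≤ (s+1).natAbs + (0:ℤ).natAbs :=
            ih x (s+1) 0 (by omega)
          have hadj : (circulantGraph n a).Adj (V n (x + (s+1) + 0*a)) (V n (x + s + 0*a)) := by
            have : x + s + 0*a = (x + (s+1) + 0*a) + (-1) := by ring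
            rw [this]
            exact adj_V_rel h3a ha _ (Or.inr (Or.inl rfl))
          have htri := hconn.dist_triangle (u := V n x) (v := V n (x + (s+1) + 0*a)) (w := V n (x + s + 0*a))
          have hone : (circulantGraph n a).dist (V n (x + (s+1) + 0*a)) (V n (x + s + 0*a)) = 1 :=
            SimpleGraph.dist_eq_one_iff_adj.mpr hadj
          omega
        · have h2 : (circulantGraph n a).dist (V n x) (V n (x + (s-1) + 0*a)) ≤ (s-1).natAbs + (0:ℤ).natAbs :=
            ih x (s-1) 0 (by omega)
          have hadj : (circulantGraph n a).Adj (V n (x + (s-1) + 0*a)) (V n (x + s + 0*a)) := by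
            have : x + s + 0*a = (x + (s-1) + 0*a) + 1 := by ring
            rw [this]
            exact adj_V_rel h3a ha _ (Or.inl rfl)
          have htri := hconn.dist_triangle (u := V n x) (v := V n (x + (s-1) + 0*a)) (w := V n (x + s + 0*a))
          have hone : (circulantGraph n a).dist (V n (x + (s-1) + 0*a)) (V n (x + s + 0*a)) = 1 :=
            SimpleGraph.dist_eq_one_iff_adj.mpr hadj
          omega
    · rcases lt_or_gt_of_ne ht with hneg | hpos
      · have h2 : (circulantGraph n a).dist (V n x) (V n (x + s + (t+1)*a)) ≤ s.natAbs + (t+1).natAbs :=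
          ih x s (t+1) (by omega)
        have hadj : (circulantGraph n a).Adj (V n (x + s + (t+1)*a)) (V n (x + s + t*a)) := by
          have : x + s + t*a = (x + s + (t+1)*a) + (-(a:ℤ)) := by ring
          rw [this]
          exact adj_V_rel h3a ha _ (Or.inr (Or.inr (Or.inr rfl)))
        have htri := hconn.dist_triangle (u := V n x) (v := V n (x + s + (t+1)*a)) (w := V n (x + s + t*a))
        have hone : (circulantGraph n a).dist (V n (x + s + (t+1)*a)) (V n (x + s + t*a)) = 1 :=
          SimpleGraph.dist_eq_one_iff_adj.mpr hadj
        omega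
      · have h2 : (circulantGraph n a).dist (V n x) (V n (x + s + (t-1)*a)) ≤ s.natAbs + (t-1).natAbs :=
          ih x s (t-1) (by omega)
        have hadj : (circulantGraph n a).Adj (V n (x + s + (t-1)*a)) (V n (x + s + t*a)) := by
          have : x + s + t*a = (x + s + (t-1)*a) + (a:ℤ) := by ring
          rw [this]
          exact adj_V_rel h3a ha _ (Or.inr (Or.inr (Or.inl rfl)))
        have htri := hconn.dist_triangle (u := V n x) (v := V n (x + s + (t-1)*a)) (w := V n (x + s + t*a))
        have hone : (circulantGraph n a).dist (V n (x + s + (t-1)*a)) (V n (x + s + t*a)) = 1 :=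
          SimpleGraph.dist_eq_one_iff_adj.mpr hadj
        omega

lemma dist_V_le (h3a : 3*a < n) (ha : 3 ≤ a) (x : ℤ) {d s t : ℤ} (hd : d = s + t*a) :
    (circulantGraph n a).dist (V n x) (V n (x + d)) ≤ s.natAbs + t.natAbs := by
  rw [hd, ← add_assoc]
  exact dist_V_le_aux h3a ha _ x s t le_rfl

lemma two_le_dist (h3a : 3*a < n) (ha : 3 ≤ a) {u v : Fin n} (hne : u ≠ v)
    (hnadj : ¬ (circulantGraph n a).Adj u v) : 2 ≤ (circulantGraph n a).dist u v := by
  have hpos := (connected_circ (n := n) h3a ha).pos_dist_of_ne hne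
  have h1 : (circulantGraph n a).dist u v ≠ 1 := fun h => hnadj (SimpleGraph.dist_eq_one_iff_adj.mp h)
  omega

lemma dist_le_eccent (v u : Fin n) : (circulantGraph n a).dist v u ≤ eccent (circulantGraph n a) v :=
  Finset.le_sup (Finset.mem_univ u)

lemma one_le_eccent (h3a : 3*a < n) (ha : 3 ≤ a) (v : Fin n) :
    1 ≤ eccent (circulantGraph n a) v := by
  have hadj : (circulantGraph n a).Adj (V n (v.val:ℤ)) (V n ((v.val:ℤ) + 1)) :=
    adj_V_rel h3a ha _ (Or.inl rfl)
  rw [V_val_self] at hadj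
  have h1 : (circulantGraph n a).dist v (V n ((v.val:ℤ)+1)) = 1 :=
    SimpleGraph.dist_eq_one_iff_adj.mpr hadj
  have := dist_le_eccent (a := a) v (V n ((v.val:ℤ)+1))
  omega

def eccB (n a : ℕ) : ℕ := (n/2 - a/2 + (a-1))/a + a/2

lemma ceil_div_bounds {a : ℕ} (ha : 0 < a) (x : ℕ) :
    x ≤ a * ((x + (a-1))/a) ∧ a * ((x + (a-1))/a) ≤ x + (a-1) := by
  have h := Nat.div_add_mod (x + (a-1)) a
  have h2 := Nat.mod_lt (x + (a-1)) ha
  omega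

lemma rep_bound {a : ℕ} (ha : 0 < a) {d W t : ℕ} (h1 : d ≤ a*t + W)
    (h2 : a*t + W ≤ d + (a-1)) (hW : a ≤ 2*W + 1) :
    ((d:ℤ) - (a:ℤ)*(t:ℤ)).natAbs ≤ W := by
  have hc : ((a*t : ℕ) : ℤ) = (a:ℤ)*(t:ℤ) := by push_cast; ring
  have h1z : (d:ℤ) ≤ ((a*t:ℕ):ℤ) + (W:ℕ) := by exact_mod_cast h1
  have h2z : ((a*t:ℕ):ℤ) + (W:ℤ) ≤ (d:ℤ) + ((a:ℤ) - 1) := by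
    have : ((a*t + W : ℕ):ℤ) ≤ ((d + (a-1) : ℕ):ℤ) := by exact_mod_cast h2
    push_cast at this
    omega
  have hWz : (a:ℤ) ≤ 2*(W:ℤ) + 1 := by exact_mod_cast hW
  omega

lemma eccB_ge_half (h : 0 < a) : a/2 ≤ eccB n a := Nat.le_add_left _ _

lemma dist_small (h3a : 3*a < n) (ha : 3 ≤ a) (X : ℤ) (d : ℕ) (hdn : 2*d ≤ n) :
    (circulantGraph n a).dist (V n X) (V n (X + (d:ℤ))) ≤ eccB n a ∧
    (circulantGraph n a).dist (V n X) (V n (X - (d:ℤ))) ≤ eccB n a := by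
  have hapos : 0 < a := by omega
  rcases le_or_gt d (a/2) with hdw | hdw
  · constructor
    · have hdist : (circulantGraph n a).dist (V n X) (V n (X + (d:ℤ))) ≤ (d:ℤ).natAbs + (0:ℤ).natAbs :=
        dist_V_le h3a ha X (show (d:ℤ) = (d:ℤ) + 0*a by ring)
      refine le_trans ?_ (eccB_ge_half hapos)
      have : ((d:ℤ)).natAbs = d := by omega
      omega
    · have heq : X - (d:ℤ) = X + (-(d:ℤ)) := by ring
      rw [heq]
      have hdist : (circulantGraph n a).dist (V n X) (V n (X + (-(d:ℤ)))) ≤ (-(d:ℤ)).natAbs + (0:ℤ).natAbs :=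
        dist_V_le h3a ha X (show (-(d:ℤ)) = (-(d:ℤ)) + 0*a by ring)
      refine le_trans ?_ (eccB_ge_half hapos)
      have : ((-(d:ℤ))).natAbs = d := by omega
      omega
  · obtain ⟨hc1, hc2⟩ := ceil_div_bounds hapos (d - a/2)
    have h1 : d ≤ a*((d - a/2 + (a-1))/a) + a/2 := by omega
    have h2 : a*((d - a/2 + (a-1))/a) + a/2 ≤ d + (a-1) := by omega
    have hsabs : ((d:ℤ) - (a:ℤ)*(((d - a/2 + (a-1))/a : ℕ):ℤ)).natAbs ≤ a/2 :=
      rep_bound hapos h1 h2 (by omega)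
    have hd2 : d ≤ n/2 := by omega
    have htQ : (d - a/2 + (a-1))/a ≤ (n/2 - a/2 + (a-1))/a :=
      Nat.div_le_div_right (Nat.add_le_add_right (Nat.sub_le_sub_right hd2 _) _)
    have hfinal : ∀ s t : ℤ, s.natAbs ≤ a/2 → t.natAbs ≤ (n/2 - a/2 + (a-1))/a →
        s.natAbs + t.natAbs ≤ eccB n a := by
      intro s t hs ht
      have := Nat.add_le_add hs ht
      unfold eccB
      refine le_trans this ?_
      rw [Nat.add_comm]
    constructor
    · have hrep : (d:ℤ) = ((d:ℤ) - (a:ℤ)*(((d - a/2 + (a-1))/a : ℕ):ℤ)) + (((d - a/2 + (a-1))/a : ℕ):ℤ)*(a:ℤ) := by ring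
      have hdist := dist_V_le h3a ha X (d := ((d:ℤ))) hrep
      refine le_trans hdist (hfinal _ _ hsabs (by simpa only [Int.natAbs_neg, Int.natAbs_natCast] using htQ))
    · have heq : X - (d:ℤ) = X + (-(d:ℤ)) := by ring
      rw [heq]
      have hrep : (-(d:ℤ)) = ((a:ℤ)*(((d - a/2 + (a-1))/a : ℕ):ℤ) - (d:ℤ)) + (-(((d - a/2 + (a-1))/a : ℕ):ℤ))*(a:ℤ) := by ring
      have hdist := dist_V_le h3a ha X (d := (-(d:ℤ))) hrep
      refine le_trans hdist (hfinal _ _ (by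
        rw [show (a:ℤ)*(((d - a/2 + (a-1))/a : ℕ):ℤ) - (d:ℤ) = -((d:ℤ) - (a:ℤ)*(((d - a/2 + (a-1))/a : ℕ):ℤ)) by ring, Int.natAbs_neg]
        exact hsabs) (by simpa only [Int.natAbs_neg, Int.natAbs_natCast] using htQ))

lemma eccent_le (h3a : 3*a < n) (ha : 3 ≤ a) (v : Fin n) :
    eccent (circulantGraph n a) v ≤ eccB n a := by
  have hnpos : (0:ℤ) < n := by exact_mod_cast Nat.pos_of_ne_zero (NeZero.ne n)
  apply Finset.sup_le
  intro u _
  set X : ℤ := (v.val : ℤ) with hXdef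
  set Y : ℤ := (u.val : ℤ) with hYdef
  have hDnn : (0:ℤ) ≤ (Y - X) % n := Int.emod_nonneg _ (by omega)
  have hDlt : (Y - X) % n < n := Int.emod_lt_of_pos _ hnpos
  have hdvd0 : ∃ c : ℤ, (Y - X) - (Y - X) % n = n * c := by
    have h := Int.emod_add_mul_ediv (Y - X) (n:ℤ)
    exact ⟨(Y - X) / n, by linarith⟩
  obtain ⟨e, he1, he2⟩ : ∃ e : ℤ, 2 * e.natAbs ≤ n ∧ (n:ℤ) ∣ (Y - (X + e)) := by
    obtain ⟨c, hc0⟩ := hdvd0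
    rcases le_or_gt (2 * ((Y - X) % n)) (n:ℤ) with hc | hc
    · refine ⟨(Y - X) % n, by omega, ⟨c, by linarith⟩⟩
    · refine ⟨(Y - X) % n - n, by omega, ⟨c + 1, by linarith⟩⟩
  have hu : u = V n (X + e) := by
    rw [show u = V n Y from (V_val_self u).symm, V_eq_iff]
    exact he2
  have hv : v = V n X := (V_val_self v).symm
  rw [hv, hu]
  rcases le_or_gt 0 e with hes | hes
  · obtain ⟨d, rfl⟩ : ∃ d : ℕ, e = (d:ℤ) := ⟨e.toNat, by omega⟩
    exact (dist_small h3a ha X d (by omega)).1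
  · obtain ⟨d, rfl⟩ : ∃ d : ℕ, e = -(d:ℤ) := ⟨(-e).toNat, by omega⟩
    have heq : X + (-(d:ℤ)) = X - (d:ℤ) := by ring
    rw [heq]
    exact (dist_small h3a ha X d (by omega)).2


lemma guard_of_eccB (ha : 0 < a) {q : ℕ} (hq : q ≤ eccB n a) :
    (q - a/2) * a ≤ n/2 - a/2 + (a-1) := by
  have h1 : q - a/2 ≤ (n/2 - a/2 + (a-1))/a := by
    unfold eccB at hq
    generalize hQ : (n/2 - a/2 + (a-1))/a = Q at hq ⊢
    omega
  exact (Nat.le_div_iff_mul_le ha).mp h1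

/-- Build a cloud from a set of integer offsets. -/
lemma buildC (h3a : 3*a < n) (ha : 3 ≤ a) (w : Fin n) (r : ℕ) (S : Finset ℤ)
    (hdist : ∀ z ∈ S, ∃ s t : ℤ, z = s + t*a ∧ s.natAbs + t.natAbs ≤ r)
    (hsep : ∀ z ∈ S, ∀ z' ∈ S, z ≠ z' →
      |z - z'| < n ∧ z - z' ≠ 1 ∧ z - z' ≠ -1 ∧ z - z' ≠ a ∧ z - z' ≠ -(a:ℤ) ∧
      z - z' ≠ (n:ℤ)-1 ∧ z - z' ≠ 1-(n:ℤ) ∧ z - z' ≠ (n:ℤ)-a ∧ z - z' ≠ (a:ℤ)-(n:ℤ)) :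
    ∃ C : Finset (Fin n), C.card = S.card ∧
      (∀ x ∈ C, (circulantGraph n a).dist w x ≤ r) ∧
      (∀ x ∈ C, ∀ y ∈ C, x ≠ y → ¬ (circulantGraph n a).Adj x y) := by
  have hkey : ∀ z ∈ S, ∀ z' ∈ S, z ≠ z' →
      V n ((w.val:ℤ) + z) ≠ V n ((w.val:ℤ) + z') ∧
      ¬ (circulantGraph n a).Adj (V n ((w.val:ℤ) + z)) (V n ((w.val:ℤ) + z')) := by
    intro z hz z' hz' hne
    obtain ⟨c1, c2, c3, c4, c5, c6, c7, c8, c9⟩ := hsep z hz z' hz' hne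
    have hD : ((w.val:ℤ) + z) - ((w.val:ℤ) + z') = z - z' := by ring
    refine not_adj_of_int h3a ?_ ?_ ?_ ?_ ?_ ?_ ?_ ?_ ?_ ?_ <;> rw [hD]
    · exact c1
    · omega
    · exact c2
    · exact c3
    · exact c4
    · exact c5
    · exact c6
    · exact c7
    · exact c8
    · exact c9
  refine ⟨S.image (fun z => V n ((w.val:ℤ) + z)), ?_, ?_, ?_⟩
  · apply Finset.card_image_of_injOn
    intro z hz z' hz' heq
    by_contra hne
    exact (hkey z hz z' hz' hne).1 heq
  · intro x hx
    obtain ⟨z, hz, rfl⟩ := Finset.mem_image.mp hx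
    obtain ⟨s, t, hst, hb⟩ := hdist z hz
    have := dist_V_le (n := n) h3a ha (w.val:ℤ) (d := z) hst
    rw [V_val_self] at this
    omega
  · intro x hx y hy hne
    obtain ⟨z, hz, rfl⟩ := Finset.mem_image.mp hx
    obtain ⟨z', hz', rfl⟩ := Finset.mem_image.mp hy
    have hzz : z ≠ z' := by
      rintro rfl
      exact hne rfl
    exact (hkey z hz z' hz' hzz).2


/-- Offsets for the sphere case `r = 1` (q ∈ {3,4}). -/
lemma offsA (h3a : 3*a < n) (ha : 3 ≤ a) :
    ∃ S : Finset ℤ, 4 ≤ S.card ∧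
      (∀ z ∈ S, ∃ s t : ℤ, z = s + t*a ∧ s.natAbs + t.natAbs ≤ 1) ∧
      (∀ z ∈ S, ∀ z' ∈ S, z ≠ z' →
        |z - z'| < n ∧ z - z' ≠ 1 ∧ z - z' ≠ -1 ∧ z - z' ≠ a ∧ z - z' ≠ -(a:ℤ) ∧
        z - z' ≠ (n:ℤ)-1 ∧ z - z' ≠ 1-(n:ℤ) ∧ z - z' ≠ (n:ℤ)-a ∧ z - z' ≠ (a:ℤ)-(n:ℤ)) := by
  have haz : (3:ℤ) ≤ a := by exact_mod_cast ha
  have hnz : 3*(a:ℤ) < n := by exact_mod_cast h3a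
  refine ⟨{1, -1, (a:ℤ), -(a:ℤ)}, ?_, ?_, ?_⟩
  · have c1 : (1:ℤ) ∉ ({-1, (a:ℤ), -(a:ℤ)} : Finset ℤ) := by
      simp only [Finset.mem_insert, Finset.mem_singleton]
      push_neg
      omega
    have c2 : (-1:ℤ) ∉ ({(a:ℤ), -(a:ℤ)} : Finset ℤ) := by
      simp only [Finset.mem_insert, Finset.mem_singleton]
      push_neg
      omega
    have c3 : ((a:ℤ)) ∉ ({-(a:ℤ)} : Finset ℤ) := by
      simp only [Finset.mem_singleton]
      omega
    rw [Finset.card_insert_of_notMem c1, Finset.card_insert_of_notMem c2,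
      Finset.card_insert_of_notMem c3, Finset.card_singleton]
  · intro z hz
    simp only [Finset.mem_insert, Finset.mem_singleton] at hz
    rcases hz with rfl | rfl | rfl | rfl
    · exact ⟨1, 0, by ring, by simp⟩
    · exact ⟨-1, 0, by ring, by simp⟩
    · exact ⟨0, 1, by ring, by simp⟩
    · exact ⟨0, -1, by ring, by simp⟩
  · intro z hz z' hz' hne
    simp only [Finset.mem_insert, Finset.mem_singleton] at hz hz'
    rcases hz with rfl | rfl | rfl | rfl <;> rcases hz' with rfl | rfl | rfl | rfl <;>
      first
        | (exact absurd rfl hne)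
        | (refine ⟨by rw [abs_lt]; omega, by omega, by omega, by omega, by omega,
            by omega, by omega, by omega, by omega⟩)

/-- Offsets for the explicit case r = 2, a = 3. -/
lemma offsD3 (h3a : 3*3 < n) (hn22 : 22 ≤ n) :
    ∃ S : Finset ℤ, 6 ≤ S.card ∧
      (∀ z ∈ S, ∃ s t : ℤ, z = s + t*(3:ℕ) ∧ s.natAbs + t.natAbs ≤ 2) ∧
      (∀ z ∈ S, ∀ z' ∈ S, z ≠ z' →
        |z - z'| < n ∧ z - z' ≠ 1 ∧ z - z' ≠ -1 ∧ z - z' ≠ (3:ℕ) ∧ z - z' ≠ -((3:ℕ):ℤ) ∧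
        z - z' ≠ (n:ℤ)-1 ∧ z - z' ≠ 1-(n:ℤ) ∧ z - z' ≠ (n:ℤ)-(3:ℕ) ∧ z - z' ≠ ((3:ℕ):ℤ)-(n:ℤ)) := by
  have hnz : (22:ℤ) ≤ n := by exact_mod_cast hn22
  refine ⟨{-4, -2, 0, 2, 4, 6}, ?_, ?_, ?_⟩
  · rw [show ({-4, -2, 0, 2, 4, 6} : Finset ℤ).card = 6 from by decide]
  · intro z hz
    simp only [Finset.mem_insert, Finset.mem_singleton] at hz
    rcases hz with rfl | rfl | rfl | rfl | rfl | rfl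
    · exact ⟨-1, -1, by norm_num, by simp⟩
    · exact ⟨1, -1, by norm_num, by simp⟩
    · exact ⟨0, 0, by norm_num, by simp⟩
    · exact ⟨-1, 1, by norm_num, by simp⟩
    · exact ⟨1, 1, by norm_num, by simp⟩
    · exact ⟨0, 2, by norm_num, by simp⟩
  · intro z hz z' hz' hne
    simp only [Finset.mem_insert, Finset.mem_singleton] at hz hz'
    rcases hz with rfl | rfl | rfl | rfl | rfl | rfl <;> rcases hz' with rfl | rfl | rfl | rfl | rfl | rfl <;>
      first
        | (exact absurd rfl hne)
        | (refine ⟨by rw [abs_lt]; push_cast; try omega, by push_cast; try omega, by push_cast; try omega,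
            by push_cast; try omega, by push_cast; try omega, by push_cast; try omega, by push_cast; try omega,
            by push_cast; try omega, by push_cast; try omega⟩)

/-- Offsets for the explicit case r = 2, a = 4. -/
lemma offsD4 (h3a : 3*4 < n) (hn22 : 22 ≤ n) :
    ∃ S : Finset ℤ, 6 ≤ S.card ∧
      (∀ z ∈ S, ∃ s t : ℤ, z = s + t*(4:ℕ) ∧ s.natAbs + t.natAbs ≤ 2) ∧
      (∀ z ∈ S, ∀ z' ∈ S, z ≠ z' →
        |z - z'| < n ∧ z - z' ≠ 1 ∧ z - z' ≠ -1 ∧ z - z' ≠ (4:ℕ) ∧ z - z' ≠ -((4:ℕ):ℤ) ∧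
        z - z' ≠ (n:ℤ)-1 ∧ z - z' ≠ 1-(n:ℤ) ∧ z - z' ≠ (n:ℤ)-(4:ℕ) ∧ z - z' ≠ ((4:ℕ):ℤ)-(n:ℤ)) := by
  have hnz : (22:ℤ) ≤ n := by exact_mod_cast hn22
  refine ⟨{-5, -3, 0, 2, 5, 8}, ?_, ?_, ?_⟩
  · rw [show ({-5, -3, 0, 2, 5, 8} : Finset ℤ).card = 6 from by decide]
  · intro z hz
    simp only [Finset.mem_insert, Finset.mem_singleton] at hz
    rcases hz with rfl | rfl | rfl | rfl | rfl | rfl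
    · exact ⟨-1, -1, by norm_num, by simp⟩
    · exact ⟨1, -1, by norm_num, by simp⟩
    · exact ⟨0, 0, by norm_num, by simp⟩
    · exact ⟨2, 0, by norm_num, by simp⟩
    · exact ⟨1, 1, by norm_num, by simp⟩
    · exact ⟨0, 2, by norm_num, by simp⟩
  · intro z hz z' hz' hne
    simp only [Finset.mem_insert, Finset.mem_singleton] at hz hz'
    rcases hz with rfl | rfl | rfl | rfl | rfl | rfl <;> rcases hz' with rfl | rfl | rfl | rfl | rfl | rfl <;>
      first
        | (exact absurd rfl hne)
        | (refine ⟨by rw [abs_lt]; push_cast; try omega, by push_cast; try omega, by push_cast; try omega,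
            by push_cast; try omega, by push_cast; try omega, by push_cast; try omega, by push_cast; try omega,
            by push_cast; try omega, by push_cast; try omega⟩)


/-- Offsets for regime L : `a ≥ 2r+1`. -/
lemma offsL (h3a : 3*a < n) (ha : 3 ≤ a) (r : ℕ) (hr2 : 2 ≤ r) (hL : 2*r + 1 ≤ a) :
    ∃ S : Finset ℤ, 2*r + 2 ≤ S.card ∧
      (∀ z ∈ S, ∃ s t : ℤ, z = s + t*a ∧ s.natAbs + t.natAbs ≤ r) ∧
      (∀ z ∈ S, ∀ z' ∈ S, z ≠ z' →
        |z - z'| < n ∧ z - z' ≠ 1 ∧ z - z' ≠ -1 ∧ z - z' ≠ a ∧ z - z' ≠ -(a:ℤ) ∧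
        z - z' ≠ (n:ℤ)-1 ∧ z - z' ≠ 1-(n:ℤ) ∧ z - z' ≠ (n:ℤ)-a ∧ z - z' ≠ (a:ℤ)-(n:ℤ)) := by
  have haz : (3:ℤ) ≤ a := by exact_mod_cast ha
  have hnz : 3*(a:ℤ) < n := by exact_mod_cast h3a
  have hLz : 2*(r:ℤ) + 1 ≤ a := by exact_mod_cast hL
  have hrz : (2:ℤ) ≤ r := by exact_mod_cast hr2
  set row0 : Finset ℤ := (Finset.range (r+1)).image (fun (k:ℕ) => 2*(k:ℤ) - (r:ℤ)) with hrow0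
  set row1 : Finset ℤ := (Finset.range r).image (fun (k:ℕ) => (a:ℤ) + 2*(k:ℤ) - ((r:ℤ)-1)) with hrow1
  set zee : ℤ := -(a:ℤ) + ((r:ℤ)-1) with hzee
  have hmem0 : ∀ x, x ∈ row0 ↔ ∃ k : ℕ, k < r+1 ∧ x = 2*(k:ℤ) - r := by
    intro x
    simp only [hrow0, Finset.mem_image, Finset.mem_range]
    constructor
    · rintro ⟨k, hk, rfl⟩; exact ⟨k, hk, rfl⟩
    · rintro ⟨k, hk, rfl⟩; exact ⟨k, hk, rfl⟩
  have hmem1 : ∀ x, x ∈ row1 ↔ ∃ k : ℕ, k < r ∧ x = (a:ℤ) + 2*(k:ℤ) - ((r:ℤ)-1) := by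
    intro x
    simp only [hrow1, Finset.mem_image, Finset.mem_range]
    constructor
    · rintro ⟨k, hk, rfl⟩; exact ⟨k, hk, rfl⟩
    · rintro ⟨k, hk, rfl⟩; exact ⟨k, hk, rfl⟩
  refine ⟨(row0 ∪ row1) ∪ {zee}, ?_, ?_, ?_⟩
  · have hd1 : Disjoint row0 row1 := by
      rw [Finset.disjoint_left]
      intro x hx hx'
      obtain ⟨k, hk, rfl⟩ := (hmem0 x).mp hx
      obtain ⟨k', hk', he⟩ := (hmem1 _).mp hx'
      omega
    have hd2 : Disjoint (row0 ∪ row1) {zee} := by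
      rw [Finset.disjoint_right]
      intro x hx hx'
      rw [Finset.mem_singleton] at hx
      subst hx
      rcases Finset.mem_union.mp hx' with h | h
      · obtain ⟨k, hk, he⟩ := (hmem0 _).mp h
        omega
      · obtain ⟨k, hk, he⟩ := (hmem1 _).mp h
        omega
    rw [Finset.card_union_of_disjoint hd2, Finset.card_union_of_disjoint hd1]
    have hc0 : row0.card = r + 1 := by
      rw [hrow0, Finset.card_image_of_injOn (fun x _ y _ h => by omega), Finset.card_range]
    have hc1 : row1.card = r := by
      rw [hrow1, Finset.card_image_of_injOn (fun x _ y _ h => by omega), Finset.card_range]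
    rw [hc0, hc1, Finset.card_singleton]
    omega
  · intro z hz
    rcases Finset.mem_union.mp hz with hz | hz
    · rcases Finset.mem_union.mp hz with hz | hz
      · obtain ⟨k, hk, rfl⟩ := (hmem0 _).mp hz
        exact ⟨2*(k:ℤ) - r, 0, by ring, by omega⟩
      · obtain ⟨k, hk, rfl⟩ := (hmem1 _).mp hz
        exact ⟨2*(k:ℤ) - ((r:ℤ)-1), 1, by ring, by omega⟩
    · rw [Finset.mem_singleton] at hz
      subst hz
      exact ⟨(r:ℤ)-1, -1, by ring, by omega⟩
  · intro z hz z' hz' hne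
    have hcases : ∀ x, x ∈ (row0 ∪ row1) ∪ ({zee} : Finset ℤ) →
        (∃ k : ℕ, k < r+1 ∧ x = 2*(k:ℤ) - r) ∨ (∃ k : ℕ, k < r ∧ x = (a:ℤ) + 2*(k:ℤ) - ((r:ℤ)-1)) ∨ x = zee := by
      intro x hx
      rcases Finset.mem_union.mp hx with h | h
      · rcases Finset.mem_union.mp h with h | h
        · exact Or.inl ((hmem0 _).mp h)
        · exact Or.inr (Or.inl ((hmem1 _).mp h))
      · exact Or.inr (Or.inr (Finset.mem_singleton.mp h))
    rcases hcases z hz with ⟨k, hk, rfl⟩ | ⟨k, hk, rfl⟩ | rfl <;>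
      rcases hcases z' hz' with ⟨k', hk', rfl⟩ | ⟨k', hk', rfl⟩ | rfl <;>
        refine ⟨by rw [abs_lt]; omega, by omega, by omega, by omega, by omega,
          by omega, by omega, by omega, by omega⟩


lemma coeff_bound {a : ℕ} (ha : 0 < a) {c d : ℤ} (m : ℕ) (h : c * (a:ℤ) = d)
    (hd : |d| < ((m:ℤ)+1) * a) : -(m:ℤ) ≤ c ∧ c ≤ m := by
  have hb : |c| ≤ m := by
    by_contra hc
    push_neg at hc
    have h1 : (m:ℤ) + 1 ≤ |c| := by omega
    have h2 : ((m:ℤ)+1) * a ≤ |c| * a := by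
      apply mul_le_mul_of_nonneg_right h1
      positivity
    have h3 : |c * (a:ℤ)| = |c| * a := by
      rw [abs_mul, abs_of_nonneg (by positivity : (0:ℤ) ≤ (a:ℤ))]
    rw [h] at h3
    omega
  exact abs_le.mp hb

lemma coeff_zero {a : ℕ} (ha : 0 < a) {c d : ℤ} (h : c * (a:ℤ) = d) (hd : |d| < a) : c = 0 := by
  have := coeff_bound ha 0 h (by push_cast; omega)
  omega

/-- Separation criterion for grid points in regime S. -/
lemma sepS (h3a : 3*a < n) (ha : 3 ≤ a) {W : ℕ} (hWa : 2*W + 1 = a ∨ 2*W + 2 = a)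
    {c δ : ℤ} (hδ : |δ| ≤ 2*W) (hpar : (c + δ) % 2 = 0)
    (hne : ¬ (c = 0 ∧ δ = 0))
    (hbig : (|c| + 2) * (a:ℤ) ≤ n) :
    |c*a + δ| < n ∧ c*a + δ ≠ 1 ∧ c*a + δ ≠ -1 ∧ c*a + δ ≠ a ∧ c*a + δ ≠ -(a:ℤ) ∧
    c*a + δ ≠ (n:ℤ)-1 ∧ c*a + δ ≠ 1-(n:ℤ) ∧ c*a + δ ≠ (n:ℤ)-a ∧ c*a + δ ≠ (a:ℤ)-(n:ℤ) := by
  have haz : (3:ℤ) ≤ a := by exact_mod_cast ha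
  have hWz : 2*(W:ℤ) + 1 = a ∨ 2*(W:ℤ) + 2 = a := by
    rcases hWa with h | h
    · exact Or.inl (by exact_mod_cast h)
    · exact Or.inr (by exact_mod_cast h)
  obtain ⟨hd1, hd2⟩ := abs_le.mp hδ
  have hM : |c * (a:ℤ)| = |c| * a := by
    rw [abs_mul, abs_of_nonneg (by positivity : (0:ℤ) ≤ (a:ℤ))]
  obtain ⟨hm1, hm2⟩ := abs_le.mp (le_of_eq hM)
  have hM2 : |c| * a ≤ |c * (a:ℤ)| := le_of_eq hM.symm
  obtain ⟨hq1, hq2⟩ := abs_le.mp (le_refl |c * (a:ℤ)|)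
  have hcnn : 0 ≤ |c| := abs_nonneg c
  -- bounds on c*a
  have hca1 : c * (a:ℤ) ≤ |c| * a := by omega
  have hca2 : -(|c| * a) ≤ c * (a:ℤ) := by omega
  have habs : ∀ x : ℤ, |x| < (n:ℤ) ↔ (-(n:ℤ) < x ∧ x < n) := fun x => abs_lt
  have hWl : 2*(W:ℤ) + 1 ≤ a := by rcases hWz with h | h <;> omega
  have hWr : (a:ℤ) ≤ 2*(W:ℤ) + 2 := by rcases hWz with h | h <;> omega
  have hexp : (|c| + 2) * (a:ℤ) = |c| * a + 2 * a := by ring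
  have hmag : -(|c| * a + 2*(W:ℤ)) ≤ c*a + δ ∧ c*a + δ ≤ |c| * a + 2*(W:ℤ) := by
    constructor <;> omega
  have hb1 : |1 - δ| < ((1:ℤ)+1) * a := by rw [abs_lt]; constructor <;> nlinarith
  have hb1' : |-1 - δ| < ((1:ℤ)+1) * a := by rw [abs_lt]; constructor <;> nlinarith
  have hb2 : |(-δ)| < (a:ℤ) := by rw [abs_neg, abs_lt]; constructor <;> omega
  refine ⟨(habs _).mpr ⟨by omega, by omega⟩, ?_, ?_, ?_, ?_, by omega, by omega, by omega, by omega⟩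
  · intro hD
    have hc1 : c * (a:ℤ) = 1 - δ := by omega
    obtain ⟨hl, hr⟩ := coeff_bound (by omega) 1 hc1 (by push_cast; push_cast at hb1; exact hb1)
    have hcc : c = -1 ∨ c = 0 ∨ c = 1 := by push_cast at hl hr; omega
    rcases hcc with rfl | rfl | rfl <;> omega
  · intro hD
    have hc1 : c * (a:ℤ) = -1 - δ := by omega
    obtain ⟨hl, hr⟩ := coeff_bound (by omega) 1 hc1 (by push_cast; push_cast at hb1'; exact hb1')
    have hcc : c = -1 ∨ c = 0 ∨ c = 1 := by push_cast at hl hr; omega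
    rcases hcc with rfl | rfl | rfl <;> omega
  · intro hD
    have hc1 : (c - 1) * (a:ℤ) = - δ := by
      have : c * (a:ℤ) = a - δ := by omega
      calc (c-1) * (a:ℤ) = c * a - a := by ring
      _ = - δ := by omega
    have hcb0 : c - 1 = 0 := coeff_zero (by omega) hc1 hb2
    have hcb : c = 1 := by omega
    subst hcb
    omega
  · intro hD
    have hc1 : (c + 1) * (a:ℤ) = - δ := by
      have : c * (a:ℤ) = -(a:ℤ) - δ := by omega
      calc (c+1) * (a:ℤ) = c * a + a := by ring
      _ = - δ := by omega
    have hcb0 : c + 1 = 0 := coeff_zero (by omega) hc1 hb2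
    have hcb : c = -1 := by omega
    subst hcb
    omega


lemma sum_bf (W : ℕ) (hW : 1 ≤ W) (m : ℕ) :
    (Finset.range (2*m+1)).sum (fun k => (if k % 2 = 0 then W else W - 1) + 1)
      = (m+1)*(W+1) + m*W := by
  induction m with
  | zero => simp
  | succ p ih =>
    have h2 : 2*(p+1)+1 = ((2*p+1) + 1) + 1 := by ring
    rw [h2, Finset.sum_range_succ, Finset.sum_range_succ, ih]
    rw [if_neg (by omega : ¬ (2*p+1) % 2 = 0), if_pos (by omega : (2*p+1+1) % 2 = 0)]
    have hexp1 : (p+1+1)*(W+1) = (p+1)*(W+1) + (W+1) := by ring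
    have hexp2 : (p+1)*W = p*W + W := by ring
    omega

lemma count_ineq {T W r : ℕ} (hT : 1 ≤ T) (hW : 1 ≤ W) (hr : W + T = r) (hr3 : 3 ≤ r) :
    2*r + 2 ≤ (T+1)*(W+1) + T*W := by
  have hexp : (T+1)*(W+1) + T*W = 2*(T*W) + T + W + 1 := by ring
  rcases Nat.lt_or_ge T 2 with hT2 | hT2
  · have hT1 : T = 1 := by omega
    subst hT1
    have : 1*W = W := by ring
    omega
  · have hp : 2*W ≤ T*W := Nat.mul_le_mul_right W hT2
    have hq : T ≤ T*W := Nat.le_mul_of_pos_right T (by omega)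
    omega

/-- Offsets for regime S : `a ≤ 2r`, `r ≥ 3`. -/
lemma offsS (h3a : 3*a < n) (ha : 3 ≤ a) (r W T : ℕ) (hr3 : 3 ≤ r)
    (hWa : 2*W + 1 = a ∨ 2*W + 2 = a) (hW1 : 1 ≤ W) (hT : W + T = r) (hT1 : 1 ≤ T)
    (hguard : (2*T+2)*a ≤ n) :
    ∃ S : Finset ℤ, 2*r + 2 ≤ S.card ∧
      (∀ z ∈ S, ∃ s t : ℤ, z = s + t*a ∧ s.natAbs + t.natAbs ≤ r) ∧
      (∀ z ∈ S, ∀ z' ∈ S, z ≠ z' →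
        |z - z'| < n ∧ z - z' ≠ 1 ∧ z - z' ≠ -1 ∧ z - z' ≠ a ∧ z - z' ≠ -(a:ℤ) ∧
        z - z' ≠ (n:ℤ)-1 ∧ z - z' ≠ 1-(n:ℤ) ∧ z - z' ≠ (n:ℤ)-a ∧ z - z' ≠ (a:ℤ)-(n:ℤ)) := by
  have haz : (3:ℤ) ≤ a := by exact_mod_cast ha
  have hWl : 2*(W:ℤ) + 1 ≤ a ∧ (a:ℤ) ≤ 2*(W:ℤ) + 2 := by
    rcases hWa with h | h
    · have hz : 2*(W:ℤ) + 1 = (a:ℤ) := by exact_mod_cast h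
      constructor <;> omega
    · have hz : 2*(W:ℤ) + 2 = (a:ℤ) := by exact_mod_cast h
      constructor <;> omega
  set b : ℕ → ℕ := fun k => if k % 2 = 0 then W else W - 1 with hbdef
  have hble : ∀ k, b k ≤ W := by
    intro k
    simp only [hbdef]
    split <;> omega
  have hbpar : ∀ k, b k % 2 = (W + k) % 2 := by
    intro k
    simp only [hbdef]
    split <;> omega
  set row : ℕ → Finset ℤ :=
    fun k => (Finset.range (b k + 1)).image
      (fun (jj:ℕ) => ((k:ℤ) - (T:ℤ))*(a:ℤ) + (2*(jj:ℤ) - ((b k:ℕ):ℤ))) with hrowdef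
  have hmemrow : ∀ k x, x ∈ row k ↔
      ∃ jj : ℕ, jj < b k + 1 ∧ x = ((k:ℤ) - (T:ℤ))*(a:ℤ) + (2*(jj:ℤ) - ((b k:ℕ):ℤ)) := by
    intro k x
    simp only [hrowdef, Finset.mem_image, Finset.mem_range]
    constructor
    · rintro ⟨jj, h1, rfl⟩; exact ⟨jj, h1, rfl⟩
    · rintro ⟨jj, h1, rfl⟩; exact ⟨jj, h1, rfl⟩
  refine ⟨(Finset.range (2*T+1)).biUnion row, ?_, ?_, ?_⟩
  · have hdisj : ∀ k ∈ Finset.range (2*T+1), ∀ k' ∈ Finset.range (2*T+1), k ≠ k' →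
        Disjoint (row k) (row k') := by
      intro k _ k' _ hkk
      rw [Finset.disjoint_left]
      intro x hx hx'
      obtain ⟨jj, hj, rfl⟩ := (hmemrow k x).mp hx
      obtain ⟨jj', hj', he⟩ := (hmemrow k' _).mp hx'
      have hdiff : ((k:ℤ) - k') * a = (2*(jj':ℤ) - (b k':ℕ)) - (2*(jj:ℤ) - (b k:ℕ)) := by
        linear_combination he
      have hz : ((k:ℤ) - k') = 0 := by
        apply coeff_zero (show 0 < a by omega) hdiff
        rw [abs_lt]
        have h1 := hble k
        have h2 := hble k'
        have h1' : ((b k:ℕ):ℤ) ≤ W := by exact_mod_cast h1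
        have h2' : ((b k':ℕ):ℤ) ≤ W := by exact_mod_cast h2
        omega
      have : k = k' := by omega
      exact hkk this
    rw [Finset.card_biUnion hdisj]
    have hrowcard : ∀ k, (row k).card = b k + 1 := by
      intro k
      rw [hrowdef]
      rw [Finset.card_image_of_injOn (fun x _ y _ h => by omega), Finset.card_range]
    calc 2*r + 2 ≤ (T+1)*(W+1) + T*W := count_ineq hT1 hW1 hT hr3
    _ = (Finset.range (2*T+1)).sum (fun k => (if k % 2 = 0 then W else W - 1) + 1) :=
        (sum_bf W hW1 T).symm
    _ = (Finset.range (2*T+1)).sum (fun k => (row k).card) := by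
        apply Finset.sum_congr rfl
        intro k _
        rw [hrowcard k]
  · intro z hz
    obtain ⟨k, hk, hz2⟩ := Finset.mem_biUnion.mp hz
    rw [Finset.mem_range] at hk
    obtain ⟨jj, hj, rfl⟩ := (hmemrow k _).mp hz2
    refine ⟨2*(jj:ℤ) - (b k:ℕ), (k:ℤ) - (T:ℤ), by ring, ?_⟩
    have h1 := hble k
    have h1' : ((b k:ℕ):ℤ) ≤ W := by exact_mod_cast h1
    have hna : (2*(jj:ℤ) - (b k:ℕ)).natAbs ≤ W := by omega
    have hnt : ((k:ℤ) - (T:ℤ)).natAbs ≤ T := by omega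
    omega
  · intro z hz z' hz' hne
    obtain ⟨k, hk, hz2⟩ := Finset.mem_biUnion.mp hz
    rw [Finset.mem_range] at hk
    obtain ⟨jj, hj, rfl⟩ := (hmemrow k _).mp hz2
    obtain ⟨k', hk', hz2'⟩ := Finset.mem_biUnion.mp hz'
    rw [Finset.mem_range] at hk'
    obtain ⟨jj', hj', rfl⟩ := (hmemrow k' _).mp hz2'
    set c : ℤ := (k:ℤ) - k' with hcdef
    set δ : ℤ := (2*(jj:ℤ) - (b k:ℕ)) - (2*(jj':ℤ) - (b k':ℕ)) with hddef
    have hzz : (((k:ℤ) - (T:ℤ))*(a:ℤ) + (2*(jj:ℤ) - ((b k:ℕ):ℤ)))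
        - (((k':ℤ) - (T:ℤ))*(a:ℤ) + (2*(jj':ℤ) - ((b k':ℕ):ℤ))) = c*a + δ := by
      rw [hcdef, hddef]; ring
    have h1' : ((b k:ℕ):ℤ) ≤ W := by exact_mod_cast hble k
    have h2' : ((b k':ℕ):ℤ) ≤ W := by exact_mod_cast hble k'
    have hδb : |δ| ≤ 2*(W:ℤ) := by
      rw [abs_le]
      constructor <;> omega
    have hpar : (c + δ) % 2 = 0 := by
      have p1 := hbpar k
      have p2 := hbpar k'
      omega
    have hnec : ¬ (c = 0 ∧ δ = 0) := by
      rintro ⟨hc0, hδ0⟩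
      apply hne
      have h2 := hzz
      rw [hc0, hδ0] at h2
      simp at h2
      linarith
    have hbig : (|c| + 2) * (a:ℤ) ≤ n := by
      have hcle : |c| ≤ 2*(T:ℤ) := by
        rw [abs_le]
        constructor <;> omega
      have step : (|c| + 2) * (a:ℤ) ≤ (2*(T:ℤ)+2) * a :=
        mul_le_mul_of_nonneg_right (by omega) (by positivity)
      have hg : ((2*T+2)*a : ℕ) ≤ (n:ℕ) := hguard
      have hgz : ((2*(T:ℤ))+2) * a ≤ (n:ℤ) := by exact_mod_cast hg
      omega
    obtain ⟨s1, s2, s3, s4, s5, s6, s7, s8, s9⟩ := sepS h3a ha hWa hδb hpar hnec hbig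
    rw [hzz]
    exact ⟨s1, s2, s3, s4, s5, s6, s7, s8, s9⟩


/-- The cloud lemma: a heavy broadcast value can be replaced by many independent 1s. -/
lemma cloud (h3a : 3*a < n) (ha : 3 ≤ a) (w : Fin n) (q : ℕ) (hq3 : 3 ≤ q)
    (hqe : q ≤ eccent (circulantGraph n a) w) :
    ∃ C : Finset (Fin n), q ≤ C.card ∧
      (∀ x ∈ C, (circulantGraph n a).dist w x ≤ (q-1)/2) ∧
      (∀ x ∈ C, ∀ y ∈ C, x ≠ y → ¬ (circulantGraph n a).Adj x y) := by
  have hqE : q ≤ eccB n a := le_trans hqe (eccent_le h3a ha w)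
  set r : ℕ := (q-1)/2 with hrdef
  have hr1 : 1 ≤ r := by omega
  have hq2r : q ≤ 2*r + 2 ∧ 2*r + 1 ≤ q := by omega
  rcases le_or_gt r 1 with hr | hr
  · -- sphere case
    obtain ⟨S, hcard, hdist, hsep⟩ := offsA h3a ha
    obtain ⟨C, hC1, hC2, hC3⟩ := buildC h3a ha w r S
      (fun z hz => by
        obtain ⟨s, t, h1, h2⟩ := hdist z hz
        exact ⟨s, t, h1, by omega⟩) hsep
    refine ⟨C, by omega, hC2, hC3⟩
  · rcases le_or_gt (2*r+1) a with hcase | hcase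
    · -- regime L
      obtain ⟨S, hcard, hdist, hsep⟩ := offsL h3a ha r (by omega) hcase
      obtain ⟨C, hC1, hC2, hC3⟩ := buildC h3a ha w r S hdist hsep
      refine ⟨C, by omega, hC2, hC3⟩
    · rcases le_or_gt 3 r with hr3 | hr3
      · -- regime S
        have hW1 : 1 ≤ (a-1)/2 := by omega
        have hWa : 2*((a-1)/2) + 1 = a ∨ 2*((a-1)/2) + 2 = a := by omega
        have hWr : (a-1)/2 + 1 ≤ r := by omega
        have hguard : (2*(r - (a-1)/2)+2)*a ≤ n := by
          have hg := guard_of_eccB (show 0 < a by omega) hqE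
          -- cast to ℤ
          have ha2q : a/2 ≤ q := by omega
          have ha2n : a/2 ≤ n/2 := by omega
          have hgz : ((q:ℤ) - (a/2 : ℕ)) * a ≤ ((n/2 : ℕ):ℤ) - ((a/2:ℕ):ℤ) + ((a:ℤ) - 1) := by
            have hc : (((q - a/2)*a : ℕ) : ℤ) = ((q:ℤ) - ((a/2:ℕ):ℤ)) * a := by
              push_cast [Nat.cast_sub ha2q]
              ring
            have hc2 : (((n/2 - a/2 + (a-1)) : ℕ) : ℤ)
                = ((n/2 : ℕ):ℤ) - ((a/2:ℕ):ℤ) + ((a:ℤ) - 1) := by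
              push_cast [Nat.cast_sub ha2n, Nat.cast_sub (show 1 ≤ a by omega)]
              ring
            rw [← hc, ← hc2]
            exact_mod_cast hg
          have hWz : 2*(((a-1)/2 : ℕ):ℤ) + 1 ≤ (a:ℤ) ∧ (a:ℤ) ≤ 2*(((a-1)/2 : ℕ):ℤ) + 2 := by
            rcases hWa with h | h
            · have hz : 2*(((a-1)/2:ℕ):ℤ) + 1 = (a:ℤ) := by exact_mod_cast h
              constructor <;> omega
            · have hz : 2*(((a-1)/2:ℕ):ℤ) + 2 = (a:ℤ) := by exact_mod_cast h
              constructor <;> omega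
          have ha2z : 2*((a/2:ℕ):ℤ) ≤ (a:ℤ) ∧ (a:ℤ) ≤ 2*((a/2:ℕ):ℤ) + 1 := by
            constructor <;> (have : 2*(a/2) ≤ a ∧ a ≤ 2*(a/2)+1 := by omega) <;> omega
          have hn2z : 2*((n/2:ℕ):ℤ) ≤ (n:ℤ) ∧ (n:ℤ) ≤ 2*((n/2:ℕ):ℤ) + 1 := by
            constructor <;> (have : 2*(n/2) ≤ n ∧ n ≤ 2*(n/2)+1 := by omega) <;> omega
          -- goal in ℤ
          have hTz : ((r - (a-1)/2 : ℕ):ℤ) = (r:ℤ) - ((a-1)/2 : ℕ) := by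
            push_cast [Nat.cast_sub (by omega : (a-1)/2 ≤ r)]
            ring
          have hqz : 2*(r:ℤ) + 1 ≤ q := by exact_mod_cast hq2r.2
          have hmul : 2*((r - (a-1)/2 : ℕ):ℤ) + 2 ≤ 2*((q:ℤ) - ((a/2:ℕ):ℤ)) - 2 := by
            rw [hTz]
            omega
          have step := mul_le_mul_of_nonneg_right hmul (by positivity : (0:ℤ) ≤ (a:ℤ))
          have hexp : (2*((q:ℤ) - ((a/2:ℕ):ℤ)) - 2) * a
              = 2*(((q:ℤ) - ((a/2:ℕ):ℤ)) * a) - 2*a := by ring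
          have hfin : (2*((r - (a-1)/2 : ℕ):ℤ) + 2) * a ≤ (n:ℤ) := by
            rw [hexp] at step
            omega
          have hcast : (((2*(r - (a-1)/2)+2)*a : ℕ):ℤ) = (2*((r - (a-1)/2 : ℕ):ℤ) + 2) * a := by
            push_cast
            ring
          have : (((2*(r - (a-1)/2)+2)*a : ℕ):ℤ) ≤ (n:ℤ) := by rw [hcast]; exact hfin
          exact_mod_cast this
        obtain ⟨S, hcard, hdist, hsep⟩ := offsS h3a ha r ((a-1)/2) (r - (a-1)/2) hr3 hWa hW1
          (by omega) (by omega) hguard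
        obtain ⟨C, hC1, hC2, hC3⟩ := buildC h3a ha w r S hdist hsep
        refine ⟨C, by omega, hC2, hC3⟩
      · -- r = 2, a ≤ 4
        have hr2 : r = 2 := by omega
        have ha4 : a ≤ 4 := by omega
        have hn22 : 22 ≤ n := by
          have hg := guard_of_eccB (show 0 < a by omega) hqE
          interval_cases a <;> omega
        interval_cases a
        · obtain ⟨S, hcard, hdist, hsep⟩ := offsD3 (n := n) (by omega) hn22
          obtain ⟨C, hC1, hC2, hC3⟩ := buildC (n := n) (a := 3) (by omega) (by omega) w 2 S
            (fun z hz => by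
              obtain ⟨s, t, h1, h2⟩ := hdist z hz
              exact ⟨s, t, h1, h2⟩) hsep
          refine ⟨C, by omega, ?_, hC3⟩
          rw [hr2]
          exact hC2
        · obtain ⟨S, hcard, hdist, hsep⟩ := offsD4 (n := n) (by omega) hn22
          obtain ⟨C, hC1, hC2, hC3⟩ := buildC (n := n) (a := 4) (by omega) (by omega) w 2 S
            (fun z hz => by
              obtain ⟨s, t, h1, h2⟩ := hdist z hz
              exact ⟨s, t, h1, h2⟩) hsep
          refine ⟨C, by omega, ?_, hC3⟩
          rw [hr2]
          exact hC2


lemma exists_optimal (h3a : 3*a < n) (ha : 3 ≤ a) :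
    ∃ g : Fin n → ℕ, IsIndepBroadcast (circulantGraph n a) g ∧
      ∑ v, g v = betaB (circulantGraph n a) := by
  have hne : {k | ∃ f : Fin n → ℕ, IsIndepBroadcast (circulantGraph n a) f ∧ ∑ v, f v = k}.Nonempty := by
    refine ⟨0, fun _ => 0, ⟨fun v => Nat.zero_le _, ?_⟩, by simp⟩
    intro u v huv h0
    simp at h0
  have hbdd : BddAbove {k | ∃ f : Fin n → ℕ, IsIndepBroadcast (circulantGraph n a) f ∧ ∑ v, f v = k} := by
    refine ⟨∑ v, eccent (circulantGraph n a) v, ?_⟩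
    rintro k ⟨f, hf, rfl⟩
    exact Finset.sum_le_sum (fun v _ => hf.1 v)
  have hmem := Nat.sSup_mem hne hbdd
  obtain ⟨g, hg1, hg2⟩ := hmem
  exact ⟨g, hg1, hg2⟩

theorem main (h3a : 3*a < n) (ha : 3 ≤ a) :
    ∃ f : Fin n → ℕ, IsIndepBroadcast (circulantGraph n a) f ∧
      (∑ v, f v) = betaB (circulantGraph n a) ∧ ∀ v, f v ≤ 2 := by
  classical
  have hconn := connected_circ (n := n) h3a ha
  obtain ⟨g, hgB, hgopt⟩ := exists_optimal h3a ha
  set H : Finset (Fin n) := Finset.univ.filter (fun w => 3 ≤ g w) with hHdef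
  have hHmem : ∀ w, w ∈ H ↔ 3 ≤ g w := by
    intro w
    simp [hHdef]
  -- choose clouds
  have hcl : ∀ w : Fin n, ∃ C : Finset (Fin n),
      (3 ≤ g w → (g w ≤ C.card ∧ (∀ x ∈ C, (circulantGraph n a).dist w x ≤ (g w - 1)/2) ∧
        (∀ x ∈ C, ∀ y ∈ C, x ≠ y → ¬ (circulantGraph n a).Adj x y))) := by
    intro w
    by_cases hw : 3 ≤ g w
    · obtain ⟨C, h1, h2, h3⟩ := cloud h3a ha w (g w) hw (hgB.1 w)
      exact ⟨C, fun _ => ⟨h1, h2, h3⟩⟩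
    · exact ⟨∅, fun h => absurd h hw⟩
  choose Cl hCl using hcl
  -- distances between heavy vertices
  have hheavy : ∀ w ∈ H, ∀ w' ∈ H, w ≠ w' → max (g w) (g w') < (circulantGraph n a).dist w w' := by
    intro w hw w' hw' hne
    exact hgB.2 w w' hne (by rw [hHmem] at hw; omega) (by rw [hHmem] at hw'; omega)
  -- fact A/D core: distance between points of different clouds ≥ 2
  have hfactD : ∀ w ∈ H, ∀ w' ∈ H, w ≠ w' → ∀ x ∈ Cl w, ∀ y ∈ Cl w', 2 ≤ (circulantGraph n a).dist x y := by
    intro w hw w' hw' hne x hx y hy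
    have hq := (hHmem w).mp hw
    have hq' := (hHmem w').mp hw'
    have h1 : (circulantGraph n a).dist w x ≤ (g w - 1)/2 := ((hCl w) hq).2.1 x hx
    have h2 : (circulantGraph n a).dist w' y ≤ (g w' - 1)/2 := ((hCl w') hq').2.1 y hy
    have htri1 : (circulantGraph n a).dist w w' ≤ (circulantGraph n a).dist w x + (circulantGraph n a).dist x w' := hconn.dist_triangle
    have htri2 : (circulantGraph n a).dist x w' ≤ (circulantGraph n a).dist x y + (circulantGraph n a).dist y w' := hconn.dist_triangle
    have hsym : (circulantGraph n a).dist y w' = (circulantGraph n a).dist w' y := SimpleGraph.dist_comm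
    have hdd := hheavy w hw w' hw' hne
    omega
  have hfactA : ∀ w ∈ H, ∀ w' ∈ H, w ≠ w' → ∀ x ∈ Cl w, x ∉ Cl w' := by
    intro w hw w' hw' hne x hx hx'
    have h2 := hfactD w hw w' hw' hne x hx x hx'
    rw [SimpleGraph.dist_self] at h2
    omega
  -- fact B : cloud points are not small-broadcast points of g
  have hfactB : ∀ w ∈ H, ∀ x ∈ Cl w, ¬ (0 < g x ∧ g x ≤ 2) := by
    intro w hw x hx ⟨hx1, hx2⟩
    have hq := (hHmem w).mp hw
    have h1 : (circulantGraph n a).dist w x ≤ (g w - 1)/2 := ((hCl w) hq).2.1 x hx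
    have hne : w ≠ x := by
      intro h
      rw [← h] at hx2
      omega
    have := hgB.2 w x hne (by omega) hx1
    omega
  -- fact C : distance from cloud point to small-broadcast point ≥ 3
  have hfactC : ∀ w ∈ H, ∀ x ∈ Cl w, ∀ u, 0 < g u → g u ≤ 2 → 3 ≤ (circulantGraph n a).dist x u := by
    intro w hw x hx u hu1 hu2
    have hq := (hHmem w).mp hw
    have h1 : (circulantGraph n a).dist w x ≤ (g w - 1)/2 := ((hCl w) hq).2.1 x hx
    have hne : w ≠ u := by
      intro h
      rw [← h] at hu2
      omega
    have hdd := hgB.2 w u hne (by omega) hu1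
    have htri : (circulantGraph n a).dist w u ≤ (circulantGraph n a).dist w x + (circulantGraph n a).dist x u := hconn.dist_triangle
    omega
  -- define the new function
  set f : Fin n → ℕ := fun x =>
    (if 0 < g x ∧ g x ≤ 2 then g x else 0) + ∑ w ∈ H, (if x ∈ Cl w then 1 else 0) with hfdef
  -- count of clouds containing x is ≤ 1
  have hcnt : ∀ x, (∑ w ∈ H, (if x ∈ Cl w then 1 else 0)) ≤ 1 := by
    intro x
    by_cases hx : ∃ w ∈ H, x ∈ Cl w
    · obtain ⟨w0, hw0, hxw0⟩ := hx
      have : (∑ w ∈ H, (if x ∈ Cl w then 1 else 0)) = 1 := by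
        rw [Finset.sum_eq_single_of_mem w0 hw0]
        · rw [if_pos hxw0]
        · intro b hb hbne
          rw [if_neg (hfactA w0 hw0 b hb (Ne.symm hbne) x hxw0)]
      omega
    · push_neg at hx
      have : (∑ w ∈ H, (if x ∈ Cl w then 1 else 0)) = 0 := by
        apply Finset.sum_eq_zero
        intro w hw
        rw [if_neg (hx w hw)]
      omega
  -- characterization of positive values of f
  have hchar : ∀ x, 0 < f x →
      (0 < g x ∧ g x ≤ 2 ∧ f x = g x) ∨ (∃ w ∈ H, x ∈ Cl w ∧ f x = 1) := by
    intro x hfx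
    by_cases hb : 0 < g x ∧ g x ≤ 2
    · left
      refine ⟨hb.1, hb.2, ?_⟩
      have hz : (∑ w ∈ H, (if x ∈ Cl w then 1 else 0)) = 0 := by
        apply Finset.sum_eq_zero
        intro w hw
        rw [if_neg (fun hmem => hfactB w hw x hmem hb)]
      rw [hfdef]
      simp only [if_pos hb, hz, add_zero]
    · right
      have hb0 : (if 0 < g x ∧ g x ≤ 2 then g x else 0) = 0 := if_neg hb
      rw [hfdef] at hfx
      simp only [hb0, zero_add] at hfx
      have : ∃ w ∈ H, x ∈ Cl w := by
        by_contra hc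
        push_neg at hc
        have : (∑ w ∈ H, (if x ∈ Cl w then 1 else 0)) = 0 :=
          Finset.sum_eq_zero (fun w hw => if_neg (hc w hw))
        omega
      obtain ⟨w0, hw0, hxw0⟩ := this
      refine ⟨w0, hw0, hxw0, ?_⟩
      have h1 := hcnt x
      rw [hfdef]
      simp only [hb0, zero_add]
      omega
  -- f is 2-bounded
  have hf2 : ∀ x, f x ≤ 2 := by
    intro x
    by_cases hb : 0 < g x ∧ g x ≤ 2
    · have hz : (∑ w ∈ H, (if x ∈ Cl w then 1 else 0)) = 0 := by
        apply Finset.sum_eq_zero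
        intro w hw
        rw [if_neg (fun hmem => hfactB w hw x hmem hb)]
      rw [hfdef]
      simp only [if_pos hb, hz, add_zero]
      exact hb.2
    · have h1 := hcnt x
      rw [hfdef]
      simp only [if_neg hb, zero_add]
      omega
  -- f is an independent broadcast
  have hfB : IsIndepBroadcast (circulantGraph n a) f := by
    constructor
    · intro x
      by_cases hfx : 0 < f x
      · rcases hchar x hfx with ⟨h1, h2, h3⟩ | ⟨w, hw, hxw, h3⟩
        · rw [h3]; exact hgB.1 x
        · rw [h3]; exact one_le_eccent h3a ha x
      · omega
    · intro u v hne hu hv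
      rcases hchar u hu with ⟨hu1, hu2, hu3⟩ | ⟨w, hw, huw, hu3⟩ <;>
        rcases hchar v hv with ⟨hv1, hv2, hv3⟩ | ⟨w', hw', hvw', hv3⟩
      · rw [hu3, hv3]
        exact hgB.2 u v hne hu1 hv1
      · have h3 := hfactC w' hw' v hvw' u hu1 hu2
        have hsym : (circulantGraph n a).dist v u = (circulantGraph n a).dist u v := SimpleGraph.dist_comm
        rw [hu3, hv3]
        omega
      · have h3 := hfactC w hw u huw v hv1 hv2
        rw [hu3, hv3]
        omega
      · rcases eq_or_ne w w' with rfl | hww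
        · -- same cloud
          have hq := (hHmem w).mp hw
          have hnadj : ¬ (circulantGraph n a).Adj u v := ((hCl w) hq).2.2 u huw v hvw' hne
          have h2 := two_le_dist h3a ha hne hnadj
          rw [hu3, hv3]
          omega
        · have h2 := hfactD w hw w' hw' hww u huw v hvw'
          rw [hu3, hv3]
          omega
  -- cost computation : ∑ f ≥ ∑ g
  have hcost : ∑ x, g x ≤ ∑ x, f x := by
    have hsplit : ∀ x, g x ≤ (if 0 < g x ∧ g x ≤ 2 then g x else 0)
        + (if 3 ≤ g x then g x else 0) := by
      intro x
      by_cases h1 : 3 ≤ g x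
      · rw [if_neg (by omega), if_pos h1]; omega
      · by_cases h2 : 0 < g x ∧ g x ≤ 2
        · rw [if_pos h2, if_neg h1]; omega
        · rw [if_neg h2, if_neg h1]; omega
    calc ∑ x, g x ≤ ∑ x, ((if 0 < g x ∧ g x ≤ 2 then g x else 0) + (if 3 ≤ g x then g x else 0)) :=
          Finset.sum_le_sum (fun x _ => hsplit x)
    _ = (∑ x, (if 0 < g x ∧ g x ≤ 2 then g x else 0)) + (∑ x, (if 3 ≤ g x then g x else 0)) :=
          Finset.sum_add_distrib
    _ ≤ (∑ x, (if 0 < g x ∧ g x ≤ 2 then g x else 0)) + (∑ x, ∑ w ∈ H, (if x ∈ Cl w then 1 else 0)) := by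
          apply Nat.add_le_add_left
          -- ∑ of heavy values ≤ total cloud sizes
          have h1 : (∑ x, (if 3 ≤ g x then g x else 0)) = ∑ w ∈ H, g w := by
            rw [hHdef, Finset.sum_filter]
          have h2 : (∑ x, ∑ w ∈ H, (if x ∈ Cl w then 1 else 0))
              = ∑ w ∈ H, (Cl w).card := by
            rw [Finset.sum_comm]
            apply Finset.sum_congr rfl
            intro w hw
            rw [Finset.sum_ite_mem]
            simp
          rw [h1, h2]
          apply Finset.sum_le_sum
          intro w hw
          exact ((hCl w) ((hHmem w).mp hw)).1
    _ = ∑ x, f x := by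
          rw [← Finset.sum_add_distrib]
  -- conclude
  have hle : ∑ x, f x ≤ betaB (circulantGraph n a) := by
    apply le_csSup
    · refine ⟨∑ v, eccent (circulantGraph n a) v, ?_⟩
      rintro k ⟨f', hf', rfl⟩
      exact Finset.sum_le_sum (fun v _ => hf'.1 v)
    · exact ⟨f, hfB, rfl⟩
  refine ⟨f, hfB, ?_, hf2⟩
  omega

end Stmt8

theorem stmt8 (n a : ℕ) (ha : 3 ≤ a) (han : a ≤ n / 2) (h3a : 3 * a < n) :
    ∃ f : Fin n → ℕ, IsIndepBroadcast (circulantGraph n a) f ∧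
      (∑ v, f v) = betaB (circulantGraph n a) ∧ ∀ v, f v ≤ 2 := by
  haveI : NeZero n := ⟨by omega⟩
  exact Stmt8.main h3a ha
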